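/- Let N ≥ 2, let A ∈ ℝ^{N,N}, and let b ∈ ℝ with b > −1. Then the following two statements are equivalent: (i) there exists γ_A > 0 such that (1 + b/2)·⟨w,Aw⟩ − (|b|/2)·|Aw| ≥ γ_A for all w ∈ ℝ^N with |w| = 1; (ii) A is invertible and μ₁(A) > |b|/(2+b). -/

import Mathlib

/-- The action of a real `N × N` matrix on `EuclideanSpace ℝ (Fin N)`. -/
noncomputable def mulE {N : ℕ} (A : Matrix (Fin N) (Fin N) ℝ)
    (w : EuclideanSpace ℝ (Fin N)) : EuclideanSpace ℝ (Fin N) :=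
  Matrix.toEuclideanLin A w

/-- The first antieigenvalue `μ₁(A)` of a real matrix `A`:
`μ₁(A) = inf { ⟨w, Aw⟩ / (|w|·|Aw|) : w ≠ 0, Aw ≠ 0 }`. -/
noncomputable def mu1 {N : ℕ} (A : Matrix (Fin N) (Fin N) ℝ) : ℝ :=
  sInf { x : ℝ | ∃ w : EuclideanSpace ℝ (Fin N), w ≠ 0 ∧ mulE A w ≠ 0 ∧
    x = (inner ℝ w (mulE A w) : ℝ) / (‖w‖ * ‖mulE A w‖) }

lemma mulE_smul {N : ℕ} (A : Matrix (Fin N) (Fin N) ℝ) (r : ℝ)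
    (w : EuclideanSpace ℝ (Fin N)) : mulE A (r • w) = r • mulE A w :=
  map_smul (Matrix.toEuclideanLin A) r w

lemma mu1_set_bddBelow {N : ℕ} (A : Matrix (Fin N) (Fin N) ℝ) :
    ∀ x ∈ { x : ℝ | ∃ w : EuclideanSpace ℝ (Fin N), w ≠ 0 ∧ mulE A w ≠ 0 ∧
      x = (inner ℝ w (mulE A w) : ℝ) / (‖w‖ * ‖mulE A w‖) }, (-1 : ℝ) ≤ x := by
  rintro x ⟨w, hw, hAw, rfl⟩
  have hd : 0 < ‖w‖ * ‖mulE A w‖ :=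
    mul_pos (norm_pos_iff.2 hw) (norm_pos_iff.2 hAw)
  rw [le_div_iff₀ hd]
  have := abs_real_inner_le_norm w (mulE A w)
  have h2 := neg_abs_le (inner ℝ w (mulE A w) : ℝ)
  linarith

lemma mulE_injective_isUnit {N : ℕ} {A : Matrix (Fin N) (Fin N) ℝ}
    (h : Function.Injective (mulE A)) : IsUnit A := by
  rw [← Matrix.mulVec_injective_iff_isUnit]
  intro v v' hvv'
  have h1 : mulE A ((WithLp.equiv 2 (Fin N → ℝ)).symm v)
      = (WithLp.equiv 2 (Fin N → ℝ)).symm (A.mulVec v) := by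
    simp [mulE, Matrix.toEuclideanLin_apply]
  have h2 : mulE A ((WithLp.equiv 2 (Fin N → ℝ)).symm v')
      = (WithLp.equiv 2 (Fin N → ℝ)).symm (A.mulVec v') := by
    simp [mulE, Matrix.toEuclideanLin_apply]
  have := h (h1.trans (by rw [hvv', ← h2]))
  exact (WithLp.equiv 2 (Fin N → ℝ)).symm.injective this

lemma isUnit_mulE_injective {N : ℕ} {A : Matrix (Fin N) (Fin N) ℝ}
    (h : IsUnit A) : Function.Injective (mulE A) := by
  have hmv : Function.Injective (A.mulVec) := Matrix.mulVec_injective_iff_isUnit.2 h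
  intro v v' hvv'
  have : A.mulVec ((WithLp.equiv 2 (Fin N → ℝ)) v)
      = A.mulVec ((WithLp.equiv 2 (Fin N → ℝ)) v') := by
    have := congrArg (WithLp.equiv 2 (Fin N → ℝ)) hvv'
    simpa [mulE, Matrix.toEuclideanLin_apply] using this
  exact (WithLp.equiv 2 (Fin N → ℝ)).injective (hmv this)

/-- The unit-vector form of the `L^p`-dissipativity condition is equivalent to the
antieigenvalue condition, for real matrices with `N ≥ 2`. -/
theorem stmt_4 {N : ℕ} (hN : 2 ≤ N) (A : Matrix (Fin N) (Fin N) ℝ) (b : ℝ)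
    (hb : -1 < b) :
    (∃ γ_A : ℝ, 0 < γ_A ∧ ∀ w : EuclideanSpace ℝ (Fin N), ‖w‖ = 1 →
      (1 + b / 2) * (inner ℝ w (mulE A w) : ℝ) - (|b| / 2) * ‖mulE A w‖ ≥ γ_A)
    ↔ (IsUnit A ∧ mu1 A > |b| / (2 + b)) := by
  have hS : mu1 A = sInf { x : ℝ | ∃ w : EuclideanSpace ℝ (Fin N), w ≠ 0 ∧ mulE A w ≠ 0 ∧
      x = (inner ℝ w (mulE A w) : ℝ) / (‖w‖ * ‖mulE A w‖) } := rfl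
  set S := { x : ℝ | ∃ w : EuclideanSpace ℝ (Fin N), w ≠ 0 ∧ mulE A w ≠ 0 ∧
    x = (inner ℝ w (mulE A w) : ℝ) / (‖w‖ * ‖mulE A w‖) } with hSdef
  have hSbdd : BddBelow S := ⟨-1, fun x hx => mu1_set_bddBelow A x hx⟩
  have h2b : (0 : ℝ) < 2 + b := by linarith
  set k : ℝ := 1 + b / 2 with hkdef
  have hk : 0 < k := by simp only [hkdef]; linarith
  set c : ℝ := |b| / (2 + b) with hcdef
  have hkc : k * c = |b| / 2 := by
    rw [hcdef, hkdef, show (1:ℝ) + b / 2 = (2 + b) / 2 by ring, div_mul_div_comm,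
      mul_comm (2 + b) |b|, mul_div_mul_right _ _ h2b.ne']
  have hc0 : 0 ≤ c := div_nonneg (abs_nonneg b) h2b.le
  clear_value k c
  clear hkdef hcdef
  constructor
  · rintro ⟨γ, hγ, hγA⟩
    -- injectivity
    have hinj0 : ∀ w : EuclideanSpace ℝ (Fin N), w ≠ 0 → mulE A w ≠ 0 := by
      intro w hw hAw
      have hwn : (0 : ℝ) < ‖w‖ := norm_pos_iff.2 hw
      have hun : ‖(‖w‖⁻¹ • w : EuclideanSpace ℝ (Fin N))‖ = 1 := by
        rw [norm_smul, norm_inv, norm_norm, inv_mul_cancel₀ hwn.ne']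
      have hAu : mulE A (‖w‖⁻¹ • w) = 0 := by rw [mulE_smul, hAw, smul_zero]
      have := hγA _ hun
      rw [hAu] at this
      simp at this
      linarith
    have hinj : Function.Injective (mulE A) := by
      have hker : ∀ v : EuclideanSpace ℝ (Fin N), mulE A v = 0 → v = 0 := by
        intro v hv
        by_contra hv0
        exact hinj0 v hv0 hv
      intro v v' hvv'
      have hsub : mulE A (v - v') = 0 := by
        have h0 : mulE A v - mulE A v' = 0 := by rw [hvv']; simp
        rw [← h0]
        exact map_sub (Matrix.toEuclideanLin A) v v'
      exact sub_eq_zero.1 (hker _ hsub)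
    refine ⟨mulE_injective_isUnit hinj, ?_⟩
    -- operator norm bound
    set L := LinearMap.toContinuousLinearMap (Matrix.toEuclideanLin A) with hL
    set M : ℝ := max ‖L‖ 1 with hM
    have hM0 : (0 : ℝ) < M := lt_of_lt_of_le one_pos (le_max_right _ _)
    have hbound : ∀ u : EuclideanSpace ℝ (Fin N), ‖u‖ = 1 → ‖mulE A u‖ ≤ M := by
      intro u hu
      have h1 : ‖L u‖ ≤ ‖L‖ * ‖u‖ := L.le_opNorm u
      rw [hu, mul_one] at h1
      exact le_trans h1 (le_max_left _ _)
    set δ : ℝ := γ / (k * M) with hδ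
    have hδ0 : 0 < δ := div_pos hγ (mul_pos hk hM0)
    have hδM : δ * (k * M) = γ := div_mul_cancel₀ γ (mul_pos hk hM0).ne'
    clear_value M δ
    clear hδ hM
    have hSne : S.Nonempty := by
      have hine : (EuclideanSpace.single (⟨0, by omega⟩ : Fin N) (1 : ℝ)) ≠ 0 := by
        intro h0
        have h1 : (EuclideanSpace.single (⟨0, by omega⟩ : Fin N) (1 : ℝ))
            (⟨0, by omega⟩ : Fin N) = 0 := by rw [h0]; rfl
        rw [EuclideanSpace.single_apply] at h1
        simp at h1
      exact ⟨_, _, hine, hinj0 _ hine, rfl⟩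
    have hlb : ∀ x ∈ S, c + δ ≤ x := by
      rintro x ⟨w, hw, hAw, rfl⟩
      have hwn : (0 : ℝ) < ‖w‖ := norm_pos_iff.2 hw
      have hAwn : (0 : ℝ) < ‖mulE A w‖ := norm_pos_iff.2 hAw
      set u : EuclideanSpace ℝ (Fin N) := ‖w‖⁻¹ • w with hu
      have hun : ‖u‖ = 1 := by
        rw [hu, norm_smul, norm_inv, norm_norm, inv_mul_cancel₀ hwn.ne']
      have hAu : mulE A u = ‖w‖⁻¹ • mulE A w := by rw [hu, mulE_smul]
      set p : ℝ := (inner ℝ u (mulE A u) : ℝ) with hp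
      set q : ℝ := ‖mulE A u‖ with hq
      have hq0 : 0 < q := by
        rw [hq, hAu, norm_smul, norm_inv, norm_norm]
        exact mul_pos (inv_pos.2 hwn) hAwn
      have hqM : q ≤ M := hbound u hun
      have hx : (inner ℝ w (mulE A w) : ℝ) / (‖w‖ * ‖mulE A w‖) = p / q := by
        rw [hp, hq, hAu, hu, real_inner_smul_left, real_inner_smul_right,
          norm_smul, norm_inv, norm_norm]
        rw [div_eq_div_iff (mul_pos hwn hAwn).ne'
          (mul_pos (inv_pos.2 hwn) hAwn).ne']
        field_simp
      rw [hx, le_div_iff₀ hq0]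
      have hyp : k * p - (|b| / 2) * q ≥ γ := hγA u hun
      have h1 : k * c * q = |b| / 2 * q := by rw [hkc]
      have h2 : δ * (k * q) ≤ γ := by
        nlinarith [mul_nonneg (mul_nonneg hδ0.le hk.le) (sub_nonneg.2 hqM)]
      have key : k * ((c + δ) * q) ≤ k * p := by nlinarith
      exact le_of_mul_le_mul_left key hk
    have hfin : c + δ ≤ sInf S := le_csInf hSne hlb
    rw [hS]
    linarith
  · rintro ⟨hU, hμ⟩
    have hinj : Function.Injective (mulE A) := isUnit_mulE_injective hU
    have hinjL : Function.Injective (Matrix.toEuclideanLin A) := hinj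
    have hbij : Function.Bijective (Matrix.toEuclideanLin A) :=
      ⟨hinjL, LinearMap.injective_iff_surjective.1 hinjL⟩
    set e := (LinearEquiv.ofBijective (Matrix.toEuclideanLin A) hbij).toContinuousLinearEquiv
      with he
    have heapp : ∀ w : EuclideanSpace ℝ (Fin N), e w = mulE A w := fun w => rfl
    set C : ℝ := max ‖(e.symm : EuclideanSpace ℝ (Fin N) →L[ℝ] EuclideanSpace ℝ (Fin N))‖ 1
      with hC
    have hC0 : (0 : ℝ) < C := lt_of_lt_of_le one_pos (le_max_right _ _)
    have hlow : ∀ w : EuclideanSpace ℝ (Fin N), ‖w‖ = 1 → 1 ≤ C * ‖mulE A w‖ := by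
      intro w hw
      have h1 : ‖(e.symm : EuclideanSpace ℝ (Fin N) →L[ℝ] EuclideanSpace ℝ (Fin N)) (e w)‖
          ≤ ‖(e.symm : EuclideanSpace ℝ (Fin N) →L[ℝ] EuclideanSpace ℝ (Fin N))‖ * ‖e w‖ :=
        ContinuousLinearMap.le_opNorm _ (e w)
      have h2 : (e.symm : EuclideanSpace ℝ (Fin N) →L[ℝ] EuclideanSpace ℝ (Fin N)) (e w) = w :=
        e.symm_apply_apply w
      rw [h2, hw, heapp w] at h1
      have h3 : ‖(e.symm : EuclideanSpace ℝ (Fin N) →L[ℝ] EuclideanSpace ℝ (Fin N))‖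
          * ‖mulE A w‖ ≤ C * ‖mulE A w‖ :=
        mul_le_mul_of_nonneg_right (le_max_left _ _) (norm_nonneg _)
      linarith
    rw [hS] at hμ
    have hμc : 0 < sInf S - c := by linarith
    have hlow' : ∃ m : ℝ, 0 < m ∧ ∀ w : EuclideanSpace ℝ (Fin N), ‖w‖ = 1 →
        m ≤ ‖mulE A w‖ := by
      refine ⟨1 / C, by positivity, fun w hw => ?_⟩
      rw [div_le_iff₀ hC0]
      have := hlow w hw
      nlinarith
    obtain ⟨m, hm0, hmle⟩ := hlow'
    clear hlow hC0 hC
    clear_value C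
    clear C heapp he
    clear e hbij hinjL
    refine ⟨k * (sInf S - c) * m, mul_pos (mul_pos hk hμc) hm0, ?_⟩
    intro w hw
    have hw0 : w ≠ 0 := by intro h; rw [h, norm_zero] at hw; norm_num at hw
    have hAw : mulE A w ≠ 0 := by
      intro h
      apply hw0
      apply hinj
      rw [h]
      simp only [mulE, map_zero]
    have hq0 : (0 : ℝ) < ‖mulE A w‖ := norm_pos_iff.2 hAw
    have hmq : m ≤ ‖mulE A w‖ := hmle w hw
    have hxS : (inner ℝ w (mulE A w) : ℝ) / (‖w‖ * ‖mulE A w‖) ∈ S := ⟨w, hw0, hAw, rfl⟩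
    have hμx : sInf S ≤ (inner ℝ w (mulE A w) : ℝ) / (‖w‖ * ‖mulE A w‖) := csInf_le hSbdd hxS
    rw [hw, one_mul, le_div_iff₀ hq0] at hμx
    have h1 : k * c * ‖mulE A w‖ = |b| / 2 * ‖mulE A w‖ := by rw [hkc]
    nlinarith [mul_nonneg hk.le (sub_nonneg.2 hμx),
      mul_nonneg (mul_nonneg hk.le hμc.le) (sub_nonneg.2 hmq)]
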